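/- Let u > 1. There exists an infinite sequence (b_k)_{k≥1} of positive reals with b_2 = 1, satisfying b_k b_{k+1} = b_k + u b_{k-1}^2 for all k ≥ 2, and such that b_{k+1} ≤ (u^{k/3} - 1)/(u^{1/3} - 1) for all k ≥ 1. -/

import Mathlib

open Set

noncomputable def Aseq (u x : ℝ) : ℕ → ℝ
  | 0 => 1
  | 1 => x
  | 2 => 1
  | (k+3) => 1 + u * (Aseq u x (k+1))^2 / Aseq u x (k+2)

lemma Aseq_rec (u x : ℝ) (k : ℕ) :
    Aseq u x (k+3) = 1 + u * (Aseq u x (k+1))^2 / Aseq u x (k+2) := rfl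


lemma Aseq_pos {u x : ℝ} (hu : 0 < u) (hx : 0 < x) : ∀ k, 0 < Aseq u x k := by
  intro k
  induction k using Nat.strong_induction_on with
  | _ k ih =>
    rcases k with _ | (_ | (_ | k))
    · exact one_pos
    · exact hx
    · exact one_pos
    · have h1 := ih (k+1) (by omega)
      have h2 := ih (k+2) (by omega)
      have h : 0 ≤ u * (Aseq u x (k+1))^2 / Aseq u x (k+2) :=
        div_nonneg (mul_nonneg hu.le (sq_nonneg _)) h2.le
      have := Aseq_rec u x k
      show 0 < Aseq u x (k+3)
      rw [Aseq_rec]; linarith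

lemma Aseq_contOn {u : ℝ} (hu : 0 < u) : ∀ k, ContinuousOn (fun x => Aseq u x k) (Ioi (0:ℝ)) := by
  intro k
  induction k using Nat.strong_induction_on with
  | _ k ih =>
    rcases k with _ | (_ | (_ | k))
    · exact continuousOn_const
    · exact continuousOn_id
    · exact continuousOn_const
    · have h1 := ih (k+1) (by omega)
      have h2 := ih (k+2) (by omega)
      have hne : ∀ x ∈ Ioi (0:ℝ), Aseq u x (k+2) ≠ 0 := fun x hx => (Aseq_pos hu hx _).ne'
      show ContinuousOn (fun x => Aseq u x (k+3)) (Ioi (0:ℝ))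
      have hE : (fun x => Aseq u x (k+3)) = (fun x => 1 + u * (Aseq u x (k+1))^2 / Aseq u x (k+2)) := rfl
      rw [hE]
      exact continuousOn_const.add ((continuousOn_const.mul (h1.pow 2)).div h2 hne)

noncomputable def Eseq (u t x : ℝ) (k : ℕ) : ℝ := Aseq u x (k+1) - t * Aseq u x k

lemma Eseq_contOn {u : ℝ} (t : ℝ) (hu : 0 < u) (k : ℕ) :
    ContinuousOn (fun x => Eseq u t x k) (Ioi (0:ℝ)) :=
  ((Aseq_contOn hu (k+1)).sub (continuousOn_const.mul (Aseq_contOn hu k)))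

lemma Eseq_zero_succ {u t x : ℝ} (h3 : t^3 = u) (ht : 1 < t) (hx : 0 < x) (k : ℕ)
    (h : Eseq u t x (k+1) = 0) : Eseq u t x (k+2) = 1 := by
  have ht0 : 0 < t := lt_trans one_pos ht
  have hu : 0 < u := by rw [← h3]; positivity
  have hA1 : 0 < Aseq u x (k+1) := Aseq_pos hu hx _
  have heq : Aseq u x (k+2) = t * Aseq u x (k+1) := by
    unfold Eseq at h; linarith
  show Aseq u x (k+3) - t * Aseq u x (k+2) = 1
  rw [Aseq_rec, heq]
  set a := Aseq u x (k+1) with ha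
  rw [← h3]
  field_simp
  ring

lemma Eseq_one_succ {u t x : ℝ} (h3 : t^3 = u) (ht : 1 < t) (hx : 0 < x) (k : ℕ)
    (h : Eseq u t x (k+1) = 1) : Eseq u t x (k+2) ≤ 0 := by
  have ht0 : 0 < t := lt_trans one_pos ht
  have hu : 0 < u := by rw [← h3]; positivity
  have hA1 : 0 < Aseq u x (k+1) := Aseq_pos hu hx _
  have heq : Aseq u x (k+2) = t * Aseq u x (k+1) + 1 := by
    unfold Eseq at h; linarith
  have hd : (0:ℝ) < t * Aseq u x (k+1) + 1 := by positivity
  show Aseq u x (k+3) - t * Aseq u x (k+2) ≤ 0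
  rw [Aseq_rec, heq]
  set a := Aseq u x (k+1) with ha
  rw [← h3]
  have hdiv : t^3 * a^2 / (t*a+1) ≤ t * (t*a+1) - 1 := by
    rw [div_le_iff₀ hd]
    nlinarith [mul_pos ht0 hA1]
  linarith

lemma Aseq_upper {u t x : ℝ} (h3 : t^3 = u) (ht : 1 < t) (hx : 0 < x) (k : ℕ)
    (h : 0 ≤ Eseq u t x (k+1)) : Aseq u x (k+3) ≤ 1 + t * Aseq u x (k+2) := by
  have ht0 : 0 < t := lt_trans one_pos ht
  have hu : 0 < u := by rw [← h3]; positivity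
  have hA1 : 0 < Aseq u x (k+1) := Aseq_pos hu hx _
  have hA2 : 0 < Aseq u x (k+2) := Aseq_pos hu hx _
  have hr : t * Aseq u x (k+1) ≤ Aseq u x (k+2) := by unfold Eseq at h; linarith
  rw [Aseq_rec]
  set a := Aseq u x (k+1) with ha
  set b := Aseq u x (k+2) with hb
  rw [← h3]
  have hsq : (t*a)*(t*a) ≤ b*b :=
    mul_self_le_mul_self (by positivity) hr
  have hdd : t^3 * a^2 / b ≤ t * b := by
    rw [div_le_iff₀ hA2]
    nlinarith [hsq]
  linarith

lemma ivt_first_le {f : ℝ → ℝ} {p q : ℝ} (hpq : p ≤ q) (hf : ContinuousOn f (Icc p q))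
    (hp : 0 < f p) (hq : f q ≤ 0) :
    ∃ z ∈ Icc p q, f z = 0 ∧ ∀ y ∈ Icc p z, 0 ≤ f y := by
  set S := Icc p q ∩ f ⁻¹' (Iic 0) with hS
  have hSne : S.Nonempty := ⟨q, right_mem_Icc.2 hpq, hq⟩
  have hSclosed : IsClosed S := hf.preimage_isClosed_of_isClosed isClosed_Icc isClosed_Iic
  have hbdd : BddBelow S := ⟨p, fun y hy => hy.1.1⟩
  set z := sInf S with hz
  have hzS : z ∈ S := hSclosed.csInf_mem hSne hbdd
  have hzI : z ∈ Icc p q := hzS.1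
  have hfz_le : f z ≤ 0 := hzS.2
  have hfz : f z = 0 := by
    rcases lt_or_eq_of_le hfz_le with hlt | heq
    · exfalso
      have hpz : p ≤ z := hzI.1
      have hcont : ContinuousOn f (Icc p z) := hf.mono (Icc_subset_Icc_right hzI.2)
      have h0mem : (0:ℝ) ∈ Icc (f z) (f p) := ⟨hfz_le, hp.le⟩
      obtain ⟨w, hwI, hw0⟩ := intermediate_value_Icc' hpz hcont h0mem
      have hwS : w ∈ S := ⟨⟨hwI.1, le_trans hwI.2 hzI.2⟩, by simpa using hw0.le⟩
      have hlw : z ≤ w := csInf_le hbdd hwS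
      have hwz : w = z := le_antisymm hwI.2 hlw
      rw [hwz] at hw0; rw [hw0] at hlt; exact lt_irrefl 0 hlt
    · exact heq
  refine ⟨z, hzI, hfz, ?_⟩
  intro y hy
  by_contra hneg
  push_neg at hneg
  have hyS : y ∈ S := ⟨⟨hy.1, le_trans hy.2 hzI.2⟩, hneg.le⟩
  have h1 : z ≤ y := csInf_le hbdd hyS
  have h2 : y = z := le_antisymm hy.2 h1
  rw [h2, hfz] at hneg; exact lt_irrefl 0 hneg

lemma ivt_first {f : ℝ → ℝ} {p q : ℝ} (hf : ContinuousOn f (uIcc p q))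
    (hp : 0 < f p) (hq : f q ≤ 0) :
    ∃ z ∈ uIcc p q, f z = 0 ∧ ∀ y ∈ uIcc p z, 0 ≤ f y := by
  rcases le_total p q with hpq | hqp
  · rw [uIcc_of_le hpq] at hf
    obtain ⟨z, hz, h0, hy⟩ := ivt_first_le hpq hf hp hq
    have hpz : p ≤ z := hz.1
    exact ⟨z, by rw [uIcc_of_le hpq]; exact hz, h0, by rw [uIcc_of_le hpz]; exact hy⟩
  · rw [uIcc_of_ge hqp] at hf
    have hmap : ∀ y ∈ Icc q p, p + q - y ∈ Icc q p := by
      intro y hy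
      exact ⟨by linarith [hy.2], by linarith [hy.1]⟩
    have hg : ContinuousOn (fun y => f (p + q - y)) (Icc q p) := by
      apply hf.comp ((continuous_const.sub continuous_id).continuousOn)
      intro y hy
      exact hmap y hy
    have hgq : 0 < (fun y => f (p + q - y)) q := by
      show 0 < f (p + q - q); rw [add_sub_cancel_right]; exact hp
    have hgp : (fun y => f (p + q - y)) p ≤ 0 := by
      show f (p + q - p) ≤ 0; rw [add_sub_cancel_left]; exact hq
    obtain ⟨z', hz', h0', hy'⟩ := ivt_first_le hqp hg hgq hgp
    have hzmem : p + q - z' ∈ Icc q p := hmap z' hz'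
    refine ⟨p + q - z', by rw [uIcc_of_ge hqp]; exact hzmem, h0', ?_⟩
    intro y hy
    have hz'le : p + q - z' ≤ p := hzmem.2
    rw [uIcc_of_ge hz'le] at hy
    have hmem : p + q - y ∈ Icc q z' := ⟨by linarith [hy.2], by linarith [hy.1]⟩
    have hval := hy' (p + q - y) hmem
    have hyy : p + q - (p + q - y) = y := by ring
    show 0 ≤ f y
    rw [← hyy]
    exact hval

theorem stmt_13 (u : ℝ) (hu : 1 < u) :
    ∃ b : ℕ → ℝ, (∀ k : ℕ, 1 ≤ k → 0 < b k) ∧ b 2 = 1 ∧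
      (∀ k : ℕ, 2 ≤ k → b k * b (k + 1) = b k + u * (b (k - 1)) ^ 2) ∧
      (∀ k : ℕ, 1 ≤ k → b (k + 1) ≤ (u ^ ((k : ℝ) / 3) - 1) / (u ^ ((1 : ℝ) / 3) - 1)) := by
  have hu0 : 0 < u := lt_trans one_pos hu
  set t := u ^ ((1:ℝ)/3) with htdef
  have ht : 1 < t := by
    rw [htdef, Real.one_lt_rpow_iff_of_pos hu0]
    left; exact ⟨hu, by norm_num⟩
  have ht0 : 0 < t := lt_trans one_pos ht
  have htne : t ≠ 0 := ht0.ne'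
  have h3 : t^3 = u := by
    rw [htdef, ← Real.rpow_natCast (u ^ ((1:ℝ)/3)) 3, ← Real.rpow_mul hu0.le]
    norm_num
  set δ := Real.sqrt ((t-1)/t^3) with hδdef
  have hfrac : 0 < (t-1)/t^3 := div_pos (by linarith) (by positivity)
  have hδpos : 0 < δ := Real.sqrt_pos.2 hfrac
  have hδsq : δ^2 = (t-1)/t^3 := Real.sq_sqrt hfrac.le
  have key : u * δ^2 = t - 1 := by
    rw [hδsq, ← h3]; field_simp
  have hδle : δ ≤ 1/t := by
    rw [hδdef]
    have h1 : (t-1)/t^3 ≤ (1/t)^2 := by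
      rw [div_pow, one_pow, div_le_div_iff₀ (by positivity) (by positivity)]
      nlinarith
    calc Real.sqrt ((t-1)/t^3) ≤ Real.sqrt ((1/t)^2) := Real.sqrt_le_sqrt h1
      _ = 1/t := Real.sqrt_sq (by positivity)
  -- the invariant
  have Inv : ∀ k : ℕ, ∃ p q : ℝ,
      Eseq u t p (k+2) = 0 ∧ Eseq u t q (k+1) = 0 ∧
      (∀ y ∈ uIcc p q, 0 < y) ∧
      (∀ y ∈ uIcc p q, ∀ j, 1 ≤ j → j ≤ k+2 → 0 ≤ Eseq u t y j) := by
    intro k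
    induction k with
    | zero =>
      refine ⟨δ, 1/t, ?_, ?_, ?_, ?_⟩
      · show (1 + u * δ^2 / 1) - t * 1 = 0
        rw [key]; ring
      · show (1:ℝ) - t * (1/t) = 0
        field_simp
        norm_num
      · intro y hy
        rw [uIcc_of_le hδle] at hy
        linarith [hy.1, hδpos]
      · intro y hy j hj1 hj2
        rw [uIcc_of_le hδle] at hy
        have hy0 : 0 < y := by linarith [hy.1, hδpos]
        have hj : j = 1 ∨ j = 2 := by omega
        rcases hj with rfl | rfl
        · show 0 ≤ (1:ℝ) - t * y
          have h1 : t * y ≤ t * (1/t) := mul_le_mul_of_nonneg_left hy.2 ht0.le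
          rw [mul_one_div, div_self htne] at h1
          linarith
        · show 0 ≤ (1 + u * y^2 / 1) - t * 1
          have hy2 : δ^2 ≤ y^2 := by nlinarith [hy.1, hδpos]
          have h2 : u * δ^2 ≤ u * y^2 := mul_le_mul_of_nonneg_left hy2 hu0.le
          rw [key] at h2
          rw [div_one]
          linarith
    | succ k ih =>
      obtain ⟨p, q, hpE, hqE, hpos, hall⟩ := ih
      have hp0 : 0 < p := hpos p left_mem_uIcc
      have hq0 : 0 < q := hpos q right_mem_uIcc
      have hp1 : Eseq u t p (k+3) = 1 := Eseq_zero_succ h3 ht hp0 (k+1) hpE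
      have hq1 : Eseq u t q (k+2) = 1 := Eseq_zero_succ h3 ht hq0 k hqE
      have hq2 : Eseq u t q (k+3) ≤ 0 := Eseq_one_succ h3 ht hq0 (k+1) hq1
      have hsub : uIcc p q ⊆ Ioi (0:ℝ) := fun y hy => hpos y hy
      have hcont : ContinuousOn (fun y => Eseq u t y (k+3)) (uIcc p q) :=
        (Eseq_contOn t hu0 (k+3)).mono hsub
      obtain ⟨z, hzmem, hz0, hznn⟩ := ivt_first hcont (by rw [hp1]; norm_num) hq2
      have hsub2 : uIcc p z ⊆ uIcc p q := uIcc_subset_uIcc left_mem_uIcc hzmem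
      refine ⟨z, p, hz0, hpE, ?_, ?_⟩
      · intro y hy
        rw [uIcc_comm] at hy
        exact hpos y (hsub2 hy)
      · intro y hy j hj1 hj2
        rw [uIcc_comm] at hy
        rcases Nat.lt_or_ge j (k+3) with hlt | hge
        · exact hall y (hsub2 hy) j hj1 (by omega)
        · have hj : j = k+3 := by omega
          subst hj
          exact hznn y hy
  -- the compact sets
  have hIccIoi : Icc δ (1/t) ⊆ Ioi (0:ℝ) := fun y hy => lt_of_lt_of_le hδpos hy.1
  set F : ℕ → Set ℝ := fun n =>
    Icc δ (1/t) ∩ ⋂ j ∈ Finset.Icc 1 n, (Icc δ (1/t) ∩ (fun x => Eseq u t x j) ⁻¹' (Ici 0))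
    with hF
  have hFclosed : ∀ n, IsClosed (F n) := by
    intro n
    apply IsClosed.inter isClosed_Icc
    apply isClosed_biInter
    intro j hj
    exact ((Eseq_contOn t hu0 j).mono hIccIoi).preimage_isClosed_of_isClosed
      isClosed_Icc isClosed_Ici
  have hFcompact : IsCompact (F 0) := by
    apply isCompact_Icc.inter_right
    apply isClosed_biInter
    intro j hj
    exact ((Eseq_contOn t hu0 j).mono hIccIoi).preimage_isClosed_of_isClosed
      isClosed_Icc isClosed_Ici
  have hmemIcc : ∀ x : ℝ, 0 < x → 0 ≤ Eseq u t x 1 → 0 ≤ Eseq u t x 2 → x ∈ Icc δ (1/t) := by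
    intro x hx h1 h2
    constructor
    · have h2' : 0 ≤ (1 + u * x^2 / 1) - t * 1 := h2
      rw [div_one] at h2'
      have hx2 : (t-1)/t^3 ≤ x^2 := by
        rw [div_le_iff₀ (by positivity)]
        nlinarith [h3]
      calc δ = Real.sqrt ((t-1)/t^3) := hδdef
        _ ≤ Real.sqrt (x^2) := Real.sqrt_le_sqrt hx2
        _ = x := Real.sqrt_sq hx.le
    · have h1' : 0 ≤ (1:ℝ) - t * x := h1
      rw [le_div_iff₀ ht0]
      linarith
  have hFne : ∀ n, (F n).Nonempty := by
    intro n
    obtain ⟨p, q, hpE, hqE, hpos, hall⟩ := Inv n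
    have hp0 : 0 < p := hpos p left_mem_uIcc
    have hpIcc : p ∈ Icc δ (1/t) :=
      hmemIcc p hp0 (hall p left_mem_uIcc 1 (by omega) (by omega))
        (hall p left_mem_uIcc 2 (by omega) (by omega))
    refine ⟨p, hpIcc, ?_⟩
    simp only [Set.mem_iInter, Set.mem_inter_iff, Set.mem_preimage, Set.mem_Ici, Finset.mem_Icc]
    intro j hj
    exact ⟨hpIcc, hall p left_mem_uIcc j hj.1 (by omega)⟩
  have hFsub : ∀ n, F (n+1) ⊆ F n := by
    intro n x hx
    obtain ⟨hx1, hx2⟩ := hx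
    refine ⟨hx1, ?_⟩
    simp only [Set.mem_iInter, Finset.mem_Icc] at hx2 ⊢
    intro j hj
    exact hx2 j ⟨hj.1, by omega⟩
  obtain ⟨x₀, hx₀⟩ :=
    IsCompact.nonempty_iInter_of_sequence_nonempty_isCompact_isClosed F hFsub hFne hFcompact hFclosed
  have hx₀F : ∀ n, x₀ ∈ F n := fun n => Set.mem_iInter.1 hx₀ n
  have hx₀Icc : x₀ ∈ Icc δ (1/t) := (hx₀F 0).1
  have hx₀pos : 0 < x₀ := lt_of_lt_of_le hδpos hx₀Icc.1
  have hE : ∀ j, 1 ≤ j → 0 ≤ Eseq u t x₀ j := by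
    intro j hj
    have h := (hx₀F j).2
    simp only [Set.mem_iInter, Set.mem_inter_iff, Set.mem_preimage, Set.mem_Ici,
      Finset.mem_Icc] at h
    exact (h j ⟨hj, le_refl j⟩).2
  -- conclusion
  refine ⟨Aseq u x₀, fun k _ => Aseq_pos hu0 hx₀pos k, rfl, ?_, ?_⟩
  · intro k hk
    obtain ⟨m, rfl⟩ : ∃ m, k = m + 2 := ⟨k - 2, by omega⟩
    have hA2 : 0 < Aseq u x₀ (m+2) := Aseq_pos hu0 hx₀pos _
    show Aseq u x₀ (m+2) * Aseq u x₀ (m+3) = Aseq u x₀ (m+2) + u * (Aseq u x₀ (m+1))^2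
    rw [Aseq_rec]
    field_simp
  · intro k hk
    have hr : u ^ ((k:ℝ)/3) = t^k := by
      rw [htdef, ← Real.rpow_natCast (u ^ ((1:ℝ)/3)) k, ← Real.rpow_mul hu0.le]
      congr 1
      push_cast
      ring
    rw [hr]
    have htm : t - 1 ≠ 0 := ne_of_gt (by linarith)
    have hbound : ∀ n, 1 ≤ n → Aseq u x₀ (n+1) ≤ (t^n - 1)/(t-1) := by
      intro n hn
      induction n, hn using Nat.le_induction with
      | base =>
        have hb : Aseq u x₀ 2 = 1 := rfl
        rw [hb, pow_one, div_self htm]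
      | succ n hn ihn =>
        have hup : Aseq u x₀ (n+2) ≤ 1 + t * Aseq u x₀ (n+1) := by
          obtain ⟨m, rfl⟩ : ∃ m, n = m + 1 := ⟨n-1, by omega⟩
          exact Aseq_upper h3 ht hx₀pos m (hE (m+1) (by omega))
        have heq2 : 1 + t * ((t^n - 1)/(t-1)) = (t^(n+1) - 1)/(t-1) := by
          field_simp
          ring
        calc Aseq u x₀ (n+1+1) ≤ 1 + t * Aseq u x₀ (n+1) := hup
          _ ≤ 1 + t * ((t^n - 1)/(t-1)) := by
              have := mul_le_mul_of_nonneg_left ihn ht0.le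
              linarith
          _ = (t^(n+1) - 1)/(t-1) := heq2
    exact hbound k hk
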